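/- Let R ∈ ℚ[x] be a nonzero polynomial with all coefficients nonnegative and at least one positive coefficient, such that no monomial of R has degree divisible by 3. Let ξ = exp(2πi/3) be a primitive third root of unity. Then R(ξ) ≠ R(1). -/

import Mathlib

lemma prim3_re (z : ℂ) (hz : IsPrimitiveRoot z 3) : z.re = -1/2 := by
  have h3 : z ^ 3 = 1 := hz.pow_eq_one
  have hne : z ≠ 1 := hz.ne_one (by norm_num)
  have hq : z ^ 2 + z + 1 = 0 := by
    have h : (z - 1) * (z ^ 2 + z + 1) = 0 := by
      have h' : (z - 1) * (z ^ 2 + z + 1) = z ^ 3 - 1 := by ring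
      rw [h', h3, sub_self]
    rcases mul_eq_zero.mp h with h' | h'
    · exact absurd (sub_eq_zero.mp h') hne
    · exact h'
  have hz0 : z ≠ 0 := by
    intro h; rw [h] at h3; simp at h3
  have habs : ‖z‖ = 1 := by
    have h : ‖z‖ ^ 3 = 1 := by rw [← norm_pow, h3, norm_one]
    nlinarith [norm_nonneg z, sq_nonneg (‖z‖ - 1), sq_nonneg (‖z‖ + 1)]
  have hconj : starRingEnd ℂ z = z ^ 2 := by
    have h1 : z * starRingEnd ℂ z = 1 := by
      rw [Complex.mul_conj, Complex.normSq_eq_norm_sq, habs]; norm_num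
    have h2 : z * z ^ 2 = 1 := by
      calc z * z ^ 2 = z ^ 3 := by ring
        _ = 1 := h3
    exact mul_left_cancel₀ hz0 (h1.trans h2.symm)
  have hsum : z + starRingEnd ℂ z = -1 := by rw [hconj]; linear_combination hq
  rw [Complex.add_conj] at hsum
  have : (2 * z.re : ℝ) = -1 := by exact_mod_cast hsum
  linarith

theorem stmt_1 (R : Polynomial ℚ) (hR : R ≠ 0)
    (hnonneg : ∀ i, 0 ≤ R.coeff i)
    (hdeg : ∀ i, R.coeff i ≠ 0 → ¬ (3 ∣ i))
    (ξ : ℂ) (hξ : IsPrimitiveRoot ξ 3) :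
    Polynomial.aeval ξ R ≠ Polynomial.aeval (1 : ℂ) R := by
  intro h
  have hev : ∀ x : ℂ, Polynomial.aeval x R = ∑ i ∈ R.support, (R.coeff i : ℂ) * x ^ i := by
    intro x
    simp [Polynomial.aeval_def, Polynomial.eval₂_eq_sum, Polynomial.sum_def, eq_ratCast]
  have key : ∀ i ∈ R.support, ((ξ : ℂ) ^ i).re = -1/2 := by
    intro i hi
    exact prim3_re _ (hξ.pow_of_coprime i
      (((Nat.prime_three.coprime_iff_not_dvd).mpr
        (hdeg i (Polynomial.mem_support_iff.mp hi))).symm))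
  have h' : (∑ i ∈ R.support, (R.coeff i : ℂ) * ξ ^ i).re
      = (∑ i ∈ R.support, (R.coeff i : ℂ) * 1 ^ i).re := by
    rw [← hev, ← hev, h]
  rw [Complex.re_sum, Complex.re_sum] at h'
  have hL : ∑ i ∈ R.support, ((R.coeff i : ℂ) * ξ ^ i).re
      = ∑ i ∈ R.support, (R.coeff i : ℝ) * (-1/2) := by
    apply Finset.sum_congr rfl
    intro i hi
    rw [Complex.mul_re]
    simp [key i hi]
  have hRt : ∑ i ∈ R.support, ((R.coeff i : ℂ) * 1 ^ i).re
      = ∑ i ∈ R.support, (R.coeff i : ℝ) := by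
    apply Finset.sum_congr rfl
    intro i hi
    simp
  rw [hL, hRt, ← Finset.sum_mul] at h'
  have hS : 0 < ∑ i ∈ R.support, (R.coeff i : ℝ) := by
    apply Finset.sum_pos
    · intro i hi
      have := (hnonneg i).lt_of_ne (Ne.symm (Polynomial.mem_support_iff.mp hi))
      exact_mod_cast this
    · exact Polynomial.support_nonempty.mpr hR
  linarith
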